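/- For all positive integers q, z, m with z < q and m ≥ 2, there exists an (m·z)-regular placement delivery array with parameters ( m·q, z·binomial(q,z)^m, z·binomial(q−1,z−1)·binomial(q,z)^{m−1}, (z+1)·binomial(q,z+1)·binomial(q,z)^{m−1} ). -/

import Mathlib

/-- A `(K,F,Z,S)` placement delivery array: an `F × K` array whose entries are either `*`
(encoded as `none`) or integers in `[1:S]` (encoded as `some s` with `s : Fin S`). -/
def IsPDA (K F Z S : ℕ) (P : Fin F → Fin K → Option (Fin S)) : Prop :=
  (∀ k : Fin K, (Finset.univ.filter fun j : Fin F => P j k = none).card = Z) ∧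
  (∀ s : Fin S, ∃ (j : Fin F) (k : Fin K), P j k = some s) ∧
  (∀ (j1 j2 : Fin F) (k1 k2 : Fin K) (s : Fin S),
      P j1 k1 = some s → P j2 k2 = some s → (j1, k1) ≠ (j2, k2) →
      P j1 k2 = none ∧ P j2 k1 = none)

/-- A PDA is `g`-regular if each integer appears exactly `g` times. -/
def PDARegular (K F S g : ℕ) (P : Fin F → Fin K → Option (Fin S)) : Prop :=
  ∀ s : Fin S,
    (Finset.univ.filter fun jk : Fin F × Fin K => P jk.1 jk.2 = some s).card = g

/-- Row `i` is a star row for the integer `s`. -/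
def PDAStarRow (K F S : ℕ) (P : Fin F → Fin K → Option (Fin S)) (i : Fin F) (s : Fin S) : Prop :=
  ∀ (j : Fin F) (k : Fin K), P j k = some s → P i k = none

/-- Condition 1 with parameter `lam`. -/
def PDACondition1 (K F Z S lam : ℕ) (P : Fin F → Fin K → Option (Fin S)) : Prop :=
  lam ∣ F ∧ lam ∣ Z ∧
  (∀ (j : Fin F) (k : Fin K),
      P j k = none ↔
        P ⟨j.val % (F / lam), Nat.lt_of_le_of_lt (Nat.mod_le _ _) j.isLt⟩ k = none) ∧
  ∃ φ : Fin S → Fin (F / lam),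
    (∀ s : Fin S, PDAStarRow K F S P (Fin.castLE (Nat.div_le_self F lam) (φ s)) s) ∧
    (∀ j : Fin (F / lam), (Finset.univ.filter fun s : Fin S => φ s = j).card * F = lam * S)

/-- Condition 2: every row contains the same number of stars. -/
def PDACondition2 (K F S : ℕ) (P : Fin F → Fin K → Option (Fin S)) : Prop :=
  ∀ j1 j2 : Fin F,
    (Finset.univ.filter fun k : Fin K => P j1 k = none).card =
    (Finset.univ.filter fun k : Fin K => P j2 k = none).card

section MNbsAux

namespace MNaux

variable {q z m : ℕ}

abbrev beta (q z : ℕ) := {B : Finset (Fin q) // B.card = z}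

def xOf (B : beta q z) (t : Fin z) : Fin q := (B.1.orderIsoOfFin B.2 t).1

lemma xOf_mem (B : beta q z) (t : Fin z) : xOf B t ∈ B.1 := (B.1.orderIsoOfFin B.2 t).2

def Tset (B : beta q z) (t : Fin z) (j : Fin q) : Finset (Fin q) :=
  insert j (B.1.erase (xOf B t))

lemma Tset_card (B : beta q z) (t : Fin z) {j : Fin q} (hj : j ∉ B.1) :
    (Tset B t j).card = z := by
  have hzpos : 0 < z := t.pos
  have hx := xOf_mem B t
  have hje : j ∉ B.1.erase (xOf B t) := fun h => hj (Finset.mem_of_mem_erase h)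
  rw [Tset, Finset.card_insert_of_notMem hje, Finset.card_erase_of_mem hx, B.2]
  omega

lemma xOf_not_mem_Tset (B : beta q z) (t : Fin z) {j : Fin q} (hj : j ∉ B.1) :
    xOf B t ∉ Tset B t j := by
  intro h
  rcases Finset.mem_insert.1 h with h | h
  · exact hj (h ▸ xOf_mem B t)
  · exact Finset.notMem_erase _ _ h

lemma Tset_compl_card (B : beta q z) (t : Fin z) {j : Fin q} (hj : j ∉ B.1) :
    (Tset B t j)ᶜ.card = q - z := by
  rw [Finset.card_compl, Tset_card B t hj, Fintype.card_fin]

def uOf (B : beta q z) (t : Fin z) (j : Fin q) (hj : j ∉ B.1) : Fin (q - z) :=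
  ((Tset B t j)ᶜ.orderIsoOfFin (Tset_compl_card B t hj)).symm
    ⟨xOf B t, Finset.mem_compl.2 (xOf_not_mem_Tset B t hj)⟩

def encB (B : beta q z) (t : Fin z) (j : Fin q) (hj : j ∉ B.1) : beta q z :=
  ⟨Tset B t j, Tset_card B t hj⟩

lemma mem_encB (B : beta q z) (t : Fin z) (j : Fin q) (hj : j ∉ B.1) :
    j ∈ (encB B t j hj).1 := Finset.mem_insert_self _ _

lemma T_compl_card (T : beta q z) : (T.1)ᶜ.card = q - z := by
  rw [Finset.card_compl, T.2, Fintype.card_fin]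

def yOf (T : beta q z) (u : Fin (q - z)) : Fin q :=
  ((T.1)ᶜ.orderIsoOfFin (T_compl_card T) u).1

lemma yOf_not_mem (T : beta q z) (u : Fin (q - z)) : yOf T u ∉ T.1 :=
  Finset.mem_compl.1 ((T.1)ᶜ.orderIsoOfFin (T_compl_card T) u).2

def Bset (T : beta q z) (u : Fin (q - z)) (j : Fin q) : Finset (Fin q) :=
  insert (yOf T u) (T.1.erase j)

lemma Bset_card (T : beta q z) (u : Fin (q - z)) {j : Fin q} (hj : j ∈ T.1) :
    (Bset T u j).card = z := by
  have hzpos : 0 < z := by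
    have h := Finset.card_pos.2 ⟨j, hj⟩
    rw [T.2] at h; exact h
  have hy : yOf T u ∉ T.1.erase j := fun h => yOf_not_mem T u (Finset.mem_of_mem_erase h)
  rw [Bset, Finset.card_insert_of_notMem hy, Finset.card_erase_of_mem hj, T.2]
  omega

def decB (T : beta q z) (u : Fin (q - z)) (j : Fin q) (hj : j ∈ T.1) : beta q z :=
  ⟨Bset T u j, Bset_card T u hj⟩

lemma not_mem_decB (T : beta q z) (u : Fin (q - z)) {j : Fin q} (hj : j ∈ T.1) :
    j ∉ (decB T u j hj).1 := by
  intro h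
  rcases Finset.mem_insert.1 h with h | h
  · exact yOf_not_mem T u (h ▸ hj)
  · exact Finset.notMem_erase _ _ h

def decT (T : beta q z) (u : Fin (q - z)) (j : Fin q) (hj : j ∈ T.1) : Fin z :=
  ((Bset T u j).orderIsoOfFin (Bset_card T u hj)).symm
    ⟨yOf T u, Finset.mem_insert_self _ _⟩


lemma oIso_symm_congr {k : ℕ} {s s' : Finset (Fin q)} (hss : s = s') {v v' : Fin q}
    (hvv : v = v') (h : s.card = k) (h' : s'.card = k) (hv : v ∈ s) (hv' : v' ∈ s') :
    (s.orderIsoOfFin h).symm ⟨v, hv⟩ = (s'.orderIsoOfFin h').symm ⟨v', hv'⟩ := by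
  subst hss; subst hvv; rfl

lemma decB_congr {T T' : beta q z} (hT : T = T') {u u' : Fin (q - z)} (hu : u = u')
    {j : Fin q} (hj : j ∈ T.1) (hj' : j ∈ T'.1) : decB T u j hj = decB T' u' j hj' := by
  subst hT; subst hu; rfl

lemma decT_congr {T T' : beta q z} (hT : T = T') {u u' : Fin (q - z)} (hu : u = u')
    {j : Fin q} (hj : j ∈ T.1) (hj' : j ∈ T'.1) : decT T u j hj = decT T' u' j hj' := by
  subst hT; subst hu; rfl

lemma yOf_encB (B : beta q z) (t : Fin z) {j : Fin q} (hj : j ∉ B.1) :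
    yOf (encB B t j hj) (uOf B t j hj) = xOf B t := by
  show (((Tset B t j)ᶜ).orderIsoOfFin _ (((Tset B t j)ᶜ).orderIsoOfFin _ |>.symm _)).1 = xOf B t
  rw [OrderIso.apply_symm_apply]

lemma decB_encB (B : beta q z) (t : Fin z) {j : Fin q} (hj : j ∉ B.1) :
    decB (encB B t j hj) (uOf B t j hj) j (mem_encB B t j hj) = B := by
  apply Subtype.ext
  show Bset _ _ j = B.1
  rw [Bset, yOf_encB B t hj]
  have h1 : (encB B t j hj).1.erase j = B.1.erase (xOf B t) := by
    show (Tset B t j).erase j = _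
    rw [Tset, Finset.erase_insert]
    intro h
    exact hj (Finset.mem_of_mem_erase h)
  rw [h1, Finset.insert_erase (xOf_mem B t)]

lemma decT_encB (B : beta q z) (t : Fin z) {j : Fin q} (hj : j ∉ B.1) :
    decT (encB B t j hj) (uOf B t j hj) j (mem_encB B t j hj) = t := by
  have hset : Bset (encB B t j hj) (uOf B t j hj) j = B.1 :=
    congrArg Subtype.val (decB_encB B t hj)
  refine (oIso_symm_congr hset (yOf_encB B t hj) _ B.2 _ (xOf_mem B t)).trans ?_
  have : (⟨xOf B t, xOf_mem B t⟩ : {x // x ∈ B.1}) = B.1.orderIsoOfFin B.2 t :=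
    Subtype.ext rfl
  rw [this, OrderIso.symm_apply_apply]

lemma xOf_decB (T : beta q z) (u : Fin (q - z)) {j : Fin q} (hj : j ∈ T.1) :
    xOf (decB T u j hj) (decT T u j hj) = yOf T u := by
  show ((Bset T u j).orderIsoOfFin _ (((Bset T u j).orderIsoOfFin _).symm _)).1 = yOf T u
  rw [OrderIso.apply_symm_apply]

lemma encB_decB (T : beta q z) (u : Fin (q - z)) {j : Fin q} (hj : j ∈ T.1) :
    encB (decB T u j hj) (decT T u j hj) j (not_mem_decB T u hj) = T := by
  apply Subtype.ext
  show Tset _ _ j = T.1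
  rw [Tset, xOf_decB T u hj]
  have h1 : (decB T u j hj).1.erase (yOf T u) = T.1.erase j := by
    show (Bset T u j).erase _ = _
    rw [Bset, Finset.erase_insert]
    intro h
    exact yOf_not_mem T u (Finset.mem_of_mem_erase h)
  rw [h1, Finset.insert_erase hj]

lemma uOf_decB (T : beta q z) (u : Fin (q - z)) {j : Fin q} (hj : j ∈ T.1) :
    uOf (decB T u j hj) (decT T u j hj) j (not_mem_decB T u hj) = u := by
  have hset : Tset (decB T u j hj) (decT T u j hj) j = T.1 :=
    congrArg Subtype.val (encB_decB T u hj)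
  have hset' : (Tset (decB T u j hj) (decT T u j hj) j)ᶜ = (T.1)ᶜ := by rw [hset]
  rw [uOf, oIso_symm_congr hset' (xOf_decB T u hj) _ (T_compl_card T)
    _ (Finset.mem_compl.2 (yOf_not_mem T u))]
  have : (⟨yOf T u, Finset.mem_compl.2 (yOf_not_mem T u)⟩ : {x // x ∈ (T.1)ᶜ}) =
      (T.1)ᶜ.orderIsoOfFin (T_compl_card T) u := Subtype.ext rfl
  rw [this, OrderIso.symm_apply_apply]


/-- The PDA on nice index types. Rows: `Fin z × (Fin m → beta q z)`,
columns: `Fin m × Fin q`, symbols: `Fin (q-z) × (Fin m → beta q z)`. -/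
def P0 (q z m : ℕ) (r : Fin z × (Fin m → beta q z)) (c : Fin m × Fin q) :
    Option (Fin (q - z) × (Fin m → beta q z)) :=
  if h : c.2 ∈ (r.2 c.1).1 then none
  else some (uOf (r.2 c.1) r.1 c.2 h,
    Function.update r.2 c.1 (encB (r.2 c.1) r.1 c.2 h))

lemma P0_none_iff {r c} : P0 q z m r c = none ↔ c.2 ∈ (r.2 c.1).1 := by
  by_cases h : c.2 ∈ (r.2 c.1).1 <;> simp [P0, h]

lemma P0_some_elim {r c s} (h : P0 q z m r c = some s) :
    ∃ hc : c.2 ∉ (r.2 c.1).1,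
      s.1 = uOf (r.2 c.1) r.1 c.2 hc ∧
      s.2 = Function.update r.2 c.1 (encB (r.2 c.1) r.1 c.2 hc) := by
  by_cases hc : c.2 ∈ (r.2 c.1).1
  · simp [P0, hc] at h
  · refine ⟨hc, ?_, ?_⟩ <;> · simp [P0, hc] at h; simp [← h]

lemma P0_C3 {r r' c c' s} (h1 : P0 q z m r c = some s) (h2 : P0 q z m r' c' = some s)
    (hne : (r, c) ≠ (r', c')) :
    P0 q z m r c' = none ∧ P0 q z m r' c = none := by
  obtain ⟨t, B⟩ := r
  obtain ⟨i, j⟩ := c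
  obtain ⟨t', B'⟩ := r'
  obtain ⟨i', j'⟩ := c'
  obtain ⟨hc, hu, hB⟩ := P0_some_elim h1
  obtain ⟨hc', hu', hB'⟩ := P0_some_elim h2
  simp only at hc hu hB hc' hu' hB' ⊢
  by_cases hii : i = i'
  · subst hii
    have hE : encB (B i) t j hc = encB (B' i) t' j' hc' := by
      have := congrFun (hB.symm.trans hB') i
      simpa using this
    by_cases hjj : j = j'
    · subst hjj
      exfalso
      have hBB : B i = B' i := by
        have e1 := decB_encB (B i) t hc
        rw [decB_congr hE (hu.symm.trans hu') (mem_encB _ _ _ _) (mem_encB _ _ _ _)] at e1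
        rw [decB_encB (B' i) t' hc'] at e1
        exact e1.symm
      have htt : t = t' := by
        have e1 := decT_encB (B i) t hc
        rw [decT_congr hE (hu.symm.trans hu') (mem_encB _ _ _ _) (mem_encB _ _ _ _)] at e1
        rw [decT_encB (B' i) t' hc'] at e1
        exact e1.symm
      have hBfun : B = B' := by
        funext l
        by_cases hl : l = i
        · subst hl; exact hBB
        · have := congrFun (hB.symm.trans hB') l
          simpa [Function.update_of_ne hl] using this
      exact hne (by rw [hBfun, htt])
    · constructor
      · rw [P0_none_iff]
        have : j' ∈ (encB (B i) t j hc).1 := hE ▸ mem_encB (B' i) t' j' hc'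
        rcases Finset.mem_insert.1 this with h | h
        · exact absurd h.symm hjj
        · exact Finset.mem_of_mem_erase h
      · rw [P0_none_iff]
        have : j ∈ (encB (B' i) t' j' hc').1 := hE ▸ mem_encB (B i) t j hc
        rcases Finset.mem_insert.1 this with h | h
        · exact absurd h hjj
        · exact Finset.mem_of_mem_erase h
  · constructor
    · rw [P0_none_iff]
      show j' ∈ (B i').1
      have e1 : B i' = (Function.update B i (encB (B i) t j hc)) i' := by
        rw [Function.update_of_ne (fun hh => hii hh.symm)]
      have e2 : (Function.update B' i' (encB (B' i') t' j' hc')) i' =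
          encB (B' i') t' j' hc' := Function.update_self _ _ _
      rw [e1, ← hB, hB', e2]
      exact mem_encB _ _ _ _
    · rw [P0_none_iff]
      show j ∈ (B' i).1
      have e1 : B' i = (Function.update B' i' (encB (B' i') t' j' hc')) i := by
        rw [Function.update_of_ne hii]
      have e2 : (Function.update B i (encB (B i) t j hc)) i =
          encB (B i) t j hc := Function.update_self _ _ _
      rw [e1, ← hB', hB, e2]
      exact mem_encB _ _ _ _


def rowOf (s : Fin (q - z) × (Fin m → beta q z)) (c : Fin m × Fin q)
    (h : c.2 ∈ (s.2 c.1).1) : Fin z × (Fin m → beta q z) :=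
  (decT (s.2 c.1) s.1 c.2 h, Function.update s.2 c.1 (decB (s.2 c.1) s.1 c.2 h))

lemma P0_rowOf (s : Fin (q - z) × (Fin m → beta q z)) (c : Fin m × Fin q)
    (h : c.2 ∈ (s.2 c.1).1) : P0 q z m (rowOf s c h) c = some s := by
  have hr2 : (rowOf s c h).2 c.1 = decB (s.2 c.1) s.1 c.2 h := Function.update_self _ _ _
  have hnm : c.2 ∉ ((rowOf s c h).2 c.1).1 := by rw [hr2]; exact not_mem_decB _ _ h
  rw [P0, dif_neg hnm]
  congr 1
  apply Prod.ext
  · show uOf ((rowOf s c h).2 c.1) (rowOf s c h).1 c.2 hnm = s.1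
    have e1 : uOf ((rowOf s c h).2 c.1) (rowOf s c h).1 c.2 hnm =
        uOf (decB (s.2 c.1) s.1 c.2 h) (decT (s.2 c.1) s.1 c.2 h) c.2
          (not_mem_decB _ _ h) := by
      congr 1
    rw [e1, uOf_decB]
  · show Function.update (rowOf s c h).2 c.1
        (encB ((rowOf s c h).2 c.1) (rowOf s c h).1 c.2 hnm) = s.2
    have e1 : encB ((rowOf s c h).2 c.1) (rowOf s c h).1 c.2 hnm =
        encB (decB (s.2 c.1) s.1 c.2 h) (decT (s.2 c.1) s.1 c.2 h) c.2
          (not_mem_decB _ _ h) := by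
      congr 1
    rw [e1, encB_decB]
    show Function.update (Function.update s.2 c.1 _) c.1 _ = s.2
    rw [Function.update_idem, Function.update_eq_self]

lemma mem_of_P0_some {r c s} (h : P0 q z m r c = some s) : c.2 ∈ (s.2 c.1).1 := by
  obtain ⟨hc, _, hB⟩ := P0_some_elim h
  rw [hB, Function.update_self]
  exact mem_encB _ _ _ _

lemma rowOf_P0 {r c s} (h : P0 q z m r c = some s) :
    rowOf s c (mem_of_P0_some h) = r := by
  obtain ⟨hc, hu, hB⟩ := P0_some_elim h
  have hs2 : s.2 c.1 = encB (r.2 c.1) r.1 c.2 hc := by rw [hB, Function.update_self]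
  apply Prod.ext
  · show decT (s.2 c.1) s.1 c.2 (mem_of_P0_some h) = r.1
    rw [decT_congr hs2 hu (mem_of_P0_some h) (mem_encB (r.2 c.1) r.1 c.2 hc), decT_encB]
  · show Function.update s.2 c.1 (decB (s.2 c.1) s.1 c.2 (mem_of_P0_some h)) = r.2
    rw [decB_congr hs2 hu (mem_of_P0_some h) (mem_encB (r.2 c.1) r.1 c.2 hc), decB_encB]
    funext l
    by_cases hl : l = c.1
    · subst hl; rw [Function.update_self]
    · rw [Function.update_of_ne hl, hB, Function.update_of_ne hl]


section counting

lemma card_ne (i : Fin m) : Fintype.card {l : Fin m // l ≠ i} = m - 1 := by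
  rw [Fintype.card_subtype]
  rw [show (Finset.univ.filter fun l : Fin m => l ≠ i) = Finset.univ.erase i from
    Finset.filter_ne' _ _]
  rw [Finset.card_erase_of_mem (Finset.mem_univ _), Finset.card_univ, Fintype.card_fin]

def subtypePiAt {γ : Type*} (i : Fin m) (p : γ → Prop) [DecidablePred p] :
    {f : Fin m → γ // p (f i)} ≃ {c : γ // p c} × ({l : Fin m // l ≠ i} → γ) where
  toFun f := (⟨f.1 i, f.2⟩, fun l => f.1 l.1)
  invFun x := ⟨fun l => if h : l = i then x.1.1 else x.2 ⟨l, h⟩, by simpa using x.1.2⟩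
  left_inv f := by
    apply Subtype.ext
    funext l
    by_cases hl : l = i
    · subst hl; simp
    · simp [hl]
  right_inv x := by
    refine Prod.ext (Subtype.ext (by simp)) ?_
    funext l
    simp [l.2]

def subtypeProdSnd {A Bt : Type*} (p : Bt → Prop) :
    {x : A × Bt // p x.2} ≃ A × {b : Bt // p b} where
  toFun x := (x.1.1, ⟨x.1.2, x.2⟩)
  invFun y := ⟨(y.1, y.2.1), y.2.2⟩
  left_inv _ := rfl
  right_inv _ := rfl

lemma card_beta : Fintype.card (beta q z) = q.choose z := by
  rw [Fintype.card_finset_len, Fintype.card_fin]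

lemma card_beta_mem (hz : 0 < z) (j : Fin q) :
    Fintype.card {b : beta q z // j ∈ b.1} = (q - 1).choose (z - 1) := by
  have e : {b : beta q z // j ∈ b.1} ≃
      {B : Finset (Fin q) // B.card = z ∧ j ∈ B} :=
    ⟨fun b => ⟨b.1.1, b.1.2, b.2⟩, fun B => ⟨⟨B.1, B.2.1⟩, B.2.2⟩,
      fun _ => rfl, fun _ => rfl⟩
  rw [Fintype.card_congr e, Fintype.card_subtype]
  have target : ((Finset.univ.erase j).powersetCard (z - 1)).card =
      (q - 1).choose (z - 1) := by
    rw [Finset.card_powersetCard, Finset.card_erase_of_mem (Finset.mem_univ _),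
      Finset.card_univ, Fintype.card_fin]
  rw [← target]
  refine Finset.card_bij' (fun B _ => B.erase j) (fun C _ => insert j C)
    ?hi ?hj ?li ?ri
  case hi =>
    intro B hB
    simp only [Finset.mem_filter, Finset.mem_univ, true_and] at hB
    rw [Finset.mem_powersetCard]
    exact ⟨fun x hx => Finset.mem_erase.2 ⟨(Finset.mem_erase.1 hx).1,
        Finset.mem_univ _⟩,
      by rw [Finset.card_erase_of_mem hB.2, hB.1]⟩
  case hj =>
    intro C hC
    rw [Finset.mem_powersetCard] at hC
    have hjC : j ∉ C := fun h => (Finset.mem_erase.1 (hC.1 h)).1 rfl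
    simp only [Finset.mem_filter, Finset.mem_univ, true_and]
    exact ⟨by rw [Finset.card_insert_of_notMem hjC, hC.2]; omega,
      Finset.mem_insert_self _ _⟩
  case li =>
    intro B hB
    simp only [Finset.mem_filter, Finset.mem_univ, true_and] at hB
    exact Finset.insert_erase hB.2
  case ri =>
    intro C hC
    rw [Finset.mem_powersetCard] at hC
    have hjC : j ∉ C := fun h => (Finset.mem_erase.1 (hC.1 h)).1 rfl
    exact Finset.erase_insert hjC

lemma count_stars (hz : 0 < z) (c : Fin m × Fin q) :
    (Finset.univ.filter fun r : Fin z × (Fin m → beta q z) =>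
        c.2 ∈ (r.2 c.1).1).card =
      z * ((q - 1).choose (z - 1) * (q.choose z) ^ (m - 1)) := by
  rw [← Fintype.card_subtype]
  have e1 : {r : Fin z × (Fin m → beta q z) // c.2 ∈ (r.2 c.1).1} ≃
      Fin z × {f : Fin m → beta q z // c.2 ∈ (f c.1).1} :=
    subtypeProdSnd (A := Fin z) (fun f : Fin m → beta q z => c.2 ∈ (f c.1).1)
  have e2 : {f : Fin m → beta q z // c.2 ∈ (f c.1).1} ≃
      {b : beta q z // c.2 ∈ b.1} × ({l : Fin m // l ≠ c.1} → beta q z) :=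
    subtypePiAt c.1 (fun b : beta q z => c.2 ∈ b.1)
  rw [Fintype.card_congr (e1.trans ((Equiv.refl _).prodCongr e2))]
  rw [Fintype.card_prod, Fintype.card_prod, Fintype.card_fin, Fintype.card_fun,
    card_beta_mem hz, card_beta, card_ne]

lemma count_cols (s : Fin (q - z) × (Fin m → beta q z)) :
    (Finset.univ.filter fun c : Fin m × Fin q => c.2 ∈ (s.2 c.1).1).card = m * z := by
  rw [← Fintype.card_subtype]
  have e : {c : Fin m × Fin q // c.2 ∈ (s.2 c.1).1} ≃
      Σ i : Fin m, {j : Fin q // j ∈ (s.2 i).1} :=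
    ⟨fun c => ⟨c.1.1, ⟨c.1.2, c.2⟩⟩, fun x => ⟨(x.1, x.2.1), x.2.2⟩,
      fun _ => rfl, fun _ => rfl⟩
  rw [Fintype.card_congr e, Fintype.card_sigma]
  have : ∀ i : Fin m, Fintype.card {j : Fin q // j ∈ (s.2 i).1} = z := by
    intro i
    exact (Fintype.card_coe _).trans (s.2 i).2
  simp only [this]
  rw [Finset.sum_const, Finset.card_univ, Fintype.card_fin, smul_eq_mul]

lemma count_occ (s : Fin (q - z) × (Fin m → beta q z)) :
    (Finset.univ.filter fun p : (Fin z × (Fin m → beta q z)) × (Fin m × Fin q) =>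
        P0 q z m p.1 p.2 = some s).card = m * z := by
  rw [← count_cols s]
  refine Finset.card_bij' (fun p _ => p.2)
    (fun c hc => (rowOf s c (by
      simp only [Finset.mem_filter, Finset.mem_univ, true_and] at hc; exact hc), c))
    ?hi ?hj ?li ?ri
  case hi =>
    intro p hp
    simp only [Finset.mem_filter, Finset.mem_univ, true_and] at hp ⊢
    exact mem_of_P0_some hp
  case hj =>
    intro c hc
    simp only [Finset.mem_filter, Finset.mem_univ, true_and] at hc ⊢
    exact P0_rowOf s c _
  case li =>
    intro p hp
    simp only [Finset.mem_filter, Finset.mem_univ, true_and] at hp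
    have := rowOf_P0 hp
    exact Prod.ext this rfl
  case ri =>
    intro c hc
    rfl

end counting


lemma card_filter_equiv {γ δ : Type*} [Fintype γ] [Fintype δ] (e : γ ≃ δ)
    (Q : δ → Prop) [DecidablePred Q] :
    (Finset.univ.filter fun x => Q (e x)).card = (Finset.univ.filter Q).card := by
  rw [← Fintype.card_subtype, ← Fintype.card_subtype]
  exact Fintype.card_congr (e.subtypeEquiv fun a => Iff.rfl)

end MNaux

open MNaux in
theorem MNbs' (q z m : ℕ) (hz : 0 < z) (hzq : z < q) (hm : 2 ≤ m) :
    ∃ P : Fin (z * (q.choose z) ^ m) → Fin (m * q) →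
          Option (Fin ((z + 1) * q.choose (z + 1) * (q.choose z) ^ (m - 1))),
      (∀ k, (Finset.univ.filter fun j => P j k = none).card =
          z * (q - 1).choose (z - 1) * (q.choose z) ^ (m - 1)) ∧
      (∀ s, ∃ j k, P j k = some s) ∧
      (∀ j1 j2 k1 k2 s, P j1 k1 = some s → P j2 k2 = some s → (j1, k1) ≠ (j2, k2) →
          P j1 k2 = none ∧ P j2 k1 = none) ∧
      (∀ s, (Finset.univ.filter fun jk : _ × _ => P jk.1 jk.2 = some s).card = m * z) := by
  obtain ⟨n, rfl⟩ : ∃ n, m = n + 1 := ⟨m - 1, by omega⟩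
  simp only [Nat.add_sub_cancel]
  set F := z * (q.choose z) ^ (n + 1) with hF
  set K := (n + 1) * q with hK
  set S := (z + 1) * q.choose (z + 1) * (q.choose z) ^ n with hSdef
  have cardRow : Fintype.card (Fin z × (Fin (n + 1) → beta q z)) = F := by
    rw [Fintype.card_prod, Fintype.card_fin, Fintype.card_fun, card_beta,
      Fintype.card_fin]
  have cardCol : Fintype.card (Fin (n + 1) × Fin q) = K := by
    simp [hK]
  have hS : S = (q - z) * (q.choose z) ^ (n + 1) := by
    have h1 : q.choose (z + 1) * (z + 1) = q.choose z * (q - z) :=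
      Nat.choose_succ_right_eq q z
    have h2 : (z + 1) * q.choose (z + 1) = (q - z) * q.choose z := by
      rw [mul_comm (z + 1) _, h1]; ring
    rw [hSdef, h2, pow_succ]; ring
  have cardSym : Fintype.card (Fin (q - z) × (Fin (n + 1) → beta q z)) = S := by
    rw [Fintype.card_prod, Fintype.card_fin, Fintype.card_fun, card_beta,
      Fintype.card_fin, hS]
  let eF : Fin F ≃ Fin z × (Fin (n + 1) → beta q z) :=
    (Fintype.equivFinOfCardEq cardRow).symm
  let eK : Fin K ≃ Fin (n + 1) × Fin q :=
    (Fintype.equivFinOfCardEq cardCol).symm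
  let eS : Fin S ≃ Fin (q - z) × (Fin (n + 1) → beta q z) :=
    (Fintype.equivFinOfCardEq cardSym).symm
  have Psome : ∀ (o : Option (Fin (q - z) × (Fin (n + 1) → beta q z))) (s : Fin S),
      o.map eS.symm = some s ↔ o = some (eS s) := by
    intro o s
    constructor
    · intro h
      rcases Option.map_eq_some_iff.1 h with ⟨a, ha, hfa⟩
      have : a = eS s := by rw [← hfa]; simp
      rw [ha, this]
    · intro h; rw [h]; simp
  refine ⟨fun j k => (P0 q z (n + 1) (eF j) (eK k)).map eS.symm, ?_, ?_, ?_, ?_⟩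
  · -- star counts
    intro k
    have h1 : ∀ j : Fin F, ((P0 q z (n + 1) (eF j) (eK k)).map eS.symm = none) ↔
        ((eK k).2 ∈ ((eF j).2 (eK k).1).1) := by
      intro j
      rw [Option.map_eq_none_iff]
      exact P0_none_iff
    rw [← Fintype.card_subtype,
      Fintype.card_congr (eF.subtypeEquiv
        (q := fun r => (eK k).2 ∈ (r.2 (eK k).1).1) h1),
      Fintype.card_subtype, count_stars hz (eK k), Nat.add_sub_cancel, mul_assoc]
  · -- every symbol occurs
    intro s
    have hcard := count_occ (q := q) (z := z) (m := n + 1) (eS s)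
    have hne : (Finset.univ.filter
        fun p : (Fin z × (Fin (n + 1) → beta q z)) × (Fin (n + 1) × Fin q) =>
          P0 q z (n + 1) p.1 p.2 = some (eS s)).Nonempty := by
      rw [← Finset.card_pos, hcard]
      exact Nat.mul_pos (Nat.succ_pos n) hz
    obtain ⟨p, hp⟩ := hne
    simp only [Finset.mem_filter, Finset.mem_univ, true_and] at hp
    refine ⟨eF.symm p.1, eK.symm p.2, ?_⟩
    simp only [Equiv.apply_symm_apply]
    rw [hp]
    simp
  · -- condition C3
    intro j1 j2 k1 k2 s h1 h2 hne
    have h1' : P0 q z (n + 1) (eF j1) (eK k1) = some (eS s) := (Psome _ s).1 h1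
    have h2' : P0 q z (n + 1) (eF j2) (eK k2) = some (eS s) := (Psome _ s).1 h2
    have hne' : ((eF j1), (eK k1)) ≠ ((eF j2), (eK k2)) := by
      intro hEq
      apply hne
      have e1 : eF j1 = eF j2 := congrArg Prod.fst hEq
      have e2 : eK k1 = eK k2 := congrArg Prod.snd hEq
      rw [Prod.mk.injEq]
      exact ⟨eF.injective e1, eK.injective e2⟩
    obtain ⟨hn1, hn2⟩ := P0_C3 h1' h2' hne'
    constructor
    · show Option.map (⇑eS.symm) (P0 q z (n + 1) (eF j1) (eK k2)) = none
      rw [hn1]; rfl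
    · show Option.map (⇑eS.symm) (P0 q z (n + 1) (eF j2) (eK k1)) = none
      rw [hn2]; rfl
  · -- regularity
    intro s
    have h1 : ∀ jk : Fin F × Fin K,
        ((P0 q z (n + 1) (eF jk.1) (eK jk.2)).map eS.symm = some s) ↔
        (fun p : (Fin z × (Fin (n + 1) → beta q z)) × (Fin (n + 1) × Fin q) =>
          P0 q z (n + 1) p.1 p.2 = some (eS s)) ((eF.prodCongr eK) jk) := by
      intro jk
      simp only [Equiv.prodCongr_apply, Prod.map]
      exact Psome _ s
    rw [← Fintype.card_subtype,
      Fintype.card_congr ((eF.prodCongr eK).subtypeEquiv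
        (q := fun p => P0 q z (n + 1) p.1 p.2 = some (eS s)) h1),
      Fintype.card_subtype, count_occ]


end MNbsAux

/-- Theorem 4 / Scheme C: for all positive integers `q, z, m` with `z < q` and
`m ≥ 2`, there exists an `(m·z)`-regular PDA with parameters
`(m·q, z·C(q,z)^m, z·C(q-1,z-1)·C(q,z)^(m-1), (z+1)·C(q,z+1)·C(q,z)^(m-1))`. -/
theorem MNbs (q z m : ℕ) (hz : 0 < z) (hzq : z < q) (hm : 2 ≤ m) :
    ∃ P : Fin (z * (q.choose z) ^ m) → Fin (m * q) →
          Option (Fin ((z + 1) * q.choose (z + 1) * (q.choose z) ^ (m - 1))),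
      IsPDA (m * q) (z * (q.choose z) ^ m)
        (z * (q - 1).choose (z - 1) * (q.choose z) ^ (m - 1))
        ((z + 1) * q.choose (z + 1) * (q.choose z) ^ (m - 1)) P ∧
      PDARegular (m * q) (z * (q.choose z) ^ m)
        ((z + 1) * q.choose (z + 1) * (q.choose z) ^ (m - 1)) (m * z) P := by
  obtain ⟨P, h1, h2, h3, h4⟩ := MNbs' q z m hz hzq hm
  exact ⟨P, ⟨h1, h2, h3⟩, h4⟩
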